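/- arXiv:1210.6204 — 4 statements merged into one kernel-verified Lean document; each statement's English description precedes it below -/
import Mathlib

section
/- Let η be a differentiable probability density on [0,∞) with η' integrable and ∫₀^∞ (η')²/η < ∞. Then for every M > 0 and n ≥ 1, and for every h with 0 ≤ h ≤ M, the squared Hellinger distance between the densities x ↦ η(x − θ₀ − h/n) and x ↦ η(x − θ₀) is bounded by 2η(0)·M/n + 2(M²/n²)·(∫₀^∞ |η'(x)| dx + ∫₀^∞ (η')²(x)/η(x) dx). -/
open MeasureTheory

/-- The location family `p_θ(x) = η(x − θ)·1{x ≥ θ}`. -/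
noncomputable def locDens (η : ℝ → ℝ) (θ : ℝ) (x : ℝ) : ℝ :=
  if θ ≤ x then η (x - θ) else 0

lemma cs_helper (μ : Measure ℝ) [IsFiniteMeasure μ] (f : ℝ → ℝ)
    (hf : Integrable f μ) (hf2 : Integrable (fun x => f x ^ 2) μ) :
    (∫ x, f x ∂μ) ^ 2 ≤ (μ Set.univ).toReal * ∫ x, f x ^ 2 ∂μ := by
  set T : ℝ := (μ Set.univ).toReal with hT
  have hT0 : 0 ≤ T := ENNReal.toReal_nonneg
  set A : ℝ := ∫ x, f x ∂μ with hA
  set S : ℝ := ∫ x, f x ^ 2 ∂μ with hS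
  have hS0 : 0 ≤ S := integral_nonneg (fun x => sq_nonneg _)
  have key : ∀ c : ℝ, 0 ≤ S - 2 * c * A + c ^ 2 * T := by
    intro c
    have h0 : 0 ≤ ∫ x, (f x - c) ^ 2 ∂μ := integral_nonneg (fun x => sq_nonneg _)
    have hint : Integrable (fun x => f x ^ 2 - 2 * c * f x) μ := by
      have := hf2.sub (hf.const_mul (2 * c))
      exact this
    have hexp : ∫ x, (f x - c) ^ 2 ∂μ = S - 2 * c * A + c ^ 2 * T := by
      have heq : ∀ x, (f x - c) ^ 2 = (f x ^ 2 - 2 * c * f x) + c ^ 2 := by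
        intro x; ring
      simp_rw [heq]
      rw [integral_add hint (integrable_const _),
        integral_sub hf2 (hf.const_mul _), integral_const_mul, integral_const]
      simp only [smul_eq_mul, measureReal_def, ← hA, ← hS, ← hT]
      ring
    linarith [hexp ▸ h0]
  rcases eq_or_lt_of_le hT0 with h0 | hpos
  · have hA0 : A = 0 := by
      by_contra hAne
      have hk := key ((S + 1) / (2 * A))
      have hc : 2 * ((S + 1) / (2 * A)) * A = S + 1 := by field_simp
      rw [← h0] at hk
      rw [hc] at hk
      linarith
    rw [hA0]
    norm_num
    exact mul_nonneg hT0 hS0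
  · have h := key (A / T)
    have hTne : T ≠ 0 := ne_of_gt hpos
    have h2 : (A / T) ^ 2 * T = A ^ 2 / T := by field_simp
    have h3 : 2 * (A / T) * A = 2 * (A ^ 2 / T) := by field_simp
    rw [h2, h3] at h
    have hfin : A ^ 2 / T ≤ S := by linarith
    calc A ^ 2 = (A ^ 2 / T) * T := by field_simp
    _ ≤ S * T := mul_le_mul_of_nonneg_right hfin hT0
    _ = T * S := by ring

section Core
variable {η : ℝ → ℝ}

lemma deriv_zero_of_zero (hnn : ∀ x, 0 ≤ η x) (ht : η t = 0) : deriv η t = 0 := by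
  apply IsLocalMin.deriv_eq_zero
  exact Filter.Eventually.of_forall (fun x => ht ▸ hnn x)

/-- pointwise Jensen bound: for `0 ≤ a ≤ b`,
`(√η b − √η a)² ≤ (b−a)/4 · ∫_{(a,b]} (η')²/η`. -/
lemma sqrt_diff_sq_le (hnn : ∀ x, 0 ≤ η x) (hdiff : Differentiable ℝ η)
    (hint1 : IntegrableOn (fun x => |deriv η x|) (Set.Ioi 0) volume)
    (hint2 : IntegrableOn (fun x => (deriv η x) ^ 2 / η x) (Set.Ioi 0) volume)
    {a b : ℝ} (ha : 0 ≤ a) (hab : a ≤ b) :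
    (Real.sqrt (η b) - Real.sqrt (η a)) ^ 2
      ≤ (b - a) / 4 * ∫ t in Set.Ioc a b, (deriv η t) ^ 2 / η t := by
  have hηc : Continuous η := hdiff.continuous
  have hder_meas : Measurable (deriv η) := measurable_deriv η
  set q : ℝ → ℝ := fun t => (deriv η t) ^ 2 / η t with hq
  have hq_meas : Measurable q := (hder_meas.pow_const 2).div hηc.measurable
  have hq_nn : ∀ t, 0 ≤ q t := fun t => div_nonneg (sq_nonneg _) (hnn t)
  have hsub : Set.Ioc a b ⊆ Set.Ioi 0 := fun t htm => lt_of_le_of_lt ha htm.1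
  have hq_int : IntegrableOn q (Set.Ioc a b) := hint2.mono_set hsub
  have hR_nn : 0 ≤ ∫ t in Set.Ioc a b, q t :=
    setIntegral_nonneg measurableSet_Ioc (fun t _ => hq_nn t)
  -- the ε-regularized bound
  have hε_bound : ∀ ε : ℝ, ε ∈ Set.Ioi (0:ℝ) →
      (Real.sqrt (η b + ε) - Real.sqrt (η a + ε)) ^ 2
        ≤ (b - a) / 4 * ∫ t in Set.Ioc a b, q t := by
    intro ε hε
    rw [Set.mem_Ioi] at hε
    set gd : ℝ → ℝ := fun t => deriv η t / (2 * Real.sqrt (η t + ε)) with hgd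
    have hgd_deriv : ∀ t, HasDerivAt (fun u => Real.sqrt (η u + ε)) (gd t) t := by
      intro t
      have h1 : HasDerivAt (fun u => η u + ε) (deriv η t) t :=
        ((hdiff t).hasDerivAt).add_const ε
      exact h1.sqrt (ne_of_gt (by linarith [hnn t] : (0:ℝ) < η t + ε))
    have hgd_meas : Measurable gd :=
      hder_meas.div ((continuous_const.mul ((hηc.add continuous_const).sqrt)).measurable)
    have hgd_sq : ∀ t, gd t ^ 2 ≤ q t / 4 := by
      intro t
      rcases eq_or_lt_of_le (hnn t) with h0 | hpos
      · have hd := deriv_zero_of_zero hnn h0.symm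
        simp [hgd, hq, hd]
      · have hεpos : (0:ℝ) < η t + ε := by linarith
        have hsq : Real.sqrt (η t + ε) ^ 2 = η t + ε := Real.sq_sqrt hεpos.le
        rw [hgd, hq, div_pow, mul_pow, hsq, div_div]
        apply div_le_div_of_nonneg_left (sq_nonneg _) (by positivity)
        nlinarith
    have hgd_sq_int : IntegrableOn (fun t => gd t ^ 2) (Set.Ioc a b) := by
      apply Integrable.mono' (hq_int.div_const 4)
        ((hgd_meas.pow_const 2).aestronglyMeasurable)
      refine Filter.Eventually.of_forall (fun t => ?_)
      rw [Real.norm_eq_abs, abs_of_nonneg (sq_nonneg _)]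
      exact hgd_sq t
    have hgd_int : IntegrableOn gd (Set.Ioc a b) := by
      have hd_int : IntegrableOn (fun t => |deriv η t| / (2 * Real.sqrt ε))
          (Set.Ioc a b) := (hint1.mono_set hsub).div_const _
      apply Integrable.mono' hd_int hgd_meas.aestronglyMeasurable
      refine Filter.Eventually.of_forall (fun t => ?_)
      rw [Real.norm_eq_abs, hgd, abs_div]
      have h2 : |2 * Real.sqrt (η t + ε)| = 2 * Real.sqrt (η t + ε) := by
        rw [abs_of_nonneg]; positivity
      rw [h2]
      apply div_le_div_of_nonneg_left (abs_nonneg _) (by positivity)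
      have := Real.sqrt_le_sqrt (show ε ≤ η t + ε by linarith [hnn t])
      linarith
    -- FTC
    have hFTC : Real.sqrt (η b + ε) - Real.sqrt (η a + ε) = ∫ t in Set.Ioc a b, gd t := by
      have hii : IntervalIntegrable gd volume a b := by
        rw [intervalIntegrable_iff_integrableOn_Ioc_of_le hab]
        exact hgd_int
      have := intervalIntegral.integral_eq_sub_of_hasDerivAt
        (f := fun u => Real.sqrt (η u + ε)) (f' := gd)
        (fun x _ => hgd_deriv x) hii
      rw [intervalIntegral.integral_of_le hab] at this
      linarith
    rw [hFTC]
    -- Cauchy-Schwarz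
    haveI : IsFiniteMeasure (volume.restrict (Set.Ioc a b)) :=
      ⟨by rw [Measure.restrict_apply_univ]; exact measure_Ioc_lt_top⟩
    have hcs := cs_helper (volume.restrict (Set.Ioc a b)) gd hgd_int hgd_sq_int
    have hvol : ((volume.restrict (Set.Ioc a b)) Set.univ).toReal = b - a := by
      rw [Measure.restrict_apply_univ, Real.volume_Ioc,
        ENNReal.toReal_ofReal (by linarith)]
    rw [hvol] at hcs
    have hmono : ∫ t in Set.Ioc a b, gd t ^ 2 ≤ ∫ t in Set.Ioc a b, q t / 4 :=
      setIntegral_mono_on hgd_sq_int (hq_int.div_const 4) measurableSet_Ioc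
        (fun t _ => hgd_sq t)
    have hq4 : ∫ t in Set.Ioc a b, q t / 4 = (∫ t in Set.Ioc a b, q t) / 4 :=
      integral_div 4 _
    calc (∫ t in Set.Ioc a b, gd t) ^ 2
        ≤ (b - a) * ∫ t in Set.Ioc a b, gd t ^ 2 := hcs
      _ ≤ (b - a) * ((∫ t in Set.Ioc a b, q t) / 4) := by
          apply mul_le_mul_of_nonneg_left _ (by linarith)
          rw [← hq4]; exact hmono
      _ = (b - a) / 4 * ∫ t in Set.Ioc a b, q t := by ring
  -- take ε → 0⁺
  have htend : Filter.Tendsto (fun ε : ℝ => (Real.sqrt (η b + ε) - Real.sqrt (η a + ε)) ^ 2)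
      (nhdsWithin 0 (Set.Ioi 0)) (nhds ((Real.sqrt (η b) - Real.sqrt (η a)) ^ 2)) := by
    have hcont : ContinuousAt (fun ε : ℝ => (Real.sqrt (η b + ε) - Real.sqrt (η a + ε)) ^ 2) 0 := by
      apply ContinuousAt.pow
      exact ((Real.continuous_sqrt.comp (continuous_const.add continuous_id)).sub
        (Real.continuous_sqrt.comp (continuous_const.add continuous_id))).continuousAt
    have h2 := hcont.tendsto.mono_left (nhdsWithin_le_nhds (s := Set.Ioi 0))
    simpa using h2
  exact le_of_tendsto htend (eventually_nhdsWithin_of_forall hε_bound)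

end Core

lemma tail_bound (hnn : ∀ x, 0 ≤ η x) (hdiff : Differentiable ℝ η)
    (hint1 : IntegrableOn (fun x => |deriv η x|) (Set.Ioi 0) volume)
    (hint2 : IntegrableOn (fun x => (deriv η x) ^ 2 / η x) (Set.Ioi 0) volume)
    {s : ℝ} (hs : 0 ≤ s)
    (hGint : IntegrableOn (fun x => (Real.sqrt (η (x - s)) - Real.sqrt (η x)) ^ 2)
      (Set.Ici s) volume) :
    ∫ x in Set.Ici s, (Real.sqrt (η (x - s)) - Real.sqrt (η x)) ^ 2
      ≤ s ^ 2 * ((∫ t in Set.Ioi (0:ℝ), (deriv η t) ^ 2 / η t) / 4) := by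
  have hηc : Continuous η := hdiff.continuous
  have hder_meas : Measurable (deriv η) := measurable_deriv η
  set q : ℝ → ℝ := fun t => (deriv η t) ^ 2 / η t with hq
  have hq_meas : Measurable q := (hder_meas.pow_const 2).div hηc.measurable
  have hq_nn : ∀ t, 0 ≤ q t := fun t => div_nonneg (sq_nonneg _) (hnn t)
  set I : ℝ := ∫ t in Set.Ioi (0:ℝ), q t with hI
  have hI_nn : 0 ≤ I := setIntegral_nonneg measurableSet_Ioi (fun t _ => hq_nn t)
  set G' : ℝ → ℝ := fun x => (Real.sqrt (η (x - s)) - Real.sqrt (η x)) ^ 2 with hG'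
  set qe : ℝ → ENNReal := fun t => ENNReal.ofReal (q t) with hqe
  -- rewrite integral as lintegral
  rw [integral_eq_lintegral_of_nonneg_ae (Filter.Eventually.of_forall (fun x => sq_nonneg _))
    hGint.aestronglyMeasurable]
  apply ENNReal.toReal_le_of_le_ofReal (by positivity)
  -- main lintegral chain
  have hstep1 : ∫⁻ x in Set.Ici s, ENNReal.ofReal (G' x)
      ≤ ENNReal.ofReal (s / 4) *
        ∫⁻ x in Set.Ici s, (∫⁻ t, (Set.Ioc (x - s) x).indicator qe t) := by
    rw [← lintegral_const_mul' _ _ ENNReal.ofReal_ne_top]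
    apply lintegral_mono_ae
    rw [ae_restrict_iff' measurableSet_Ici]
    refine Filter.Eventually.of_forall (fun x hx => ?_)
    rw [Set.mem_Ici] at hx
    have hxs : 0 ≤ x - s := by linarith
    have hqint : IntegrableOn q (Set.Ioc (x - s) x) :=
      hint2.mono_set (fun t htm => lt_of_le_of_lt hxs htm.1)
    have hpt : G' x ≤ s / 4 * ∫ t in Set.Ioc (x - s) x, q t := by
      have h1 := sqrt_diff_sq_le hnn hdiff hint1 hint2 hxs (by linarith : x - s ≤ x)
      have h2 : (Real.sqrt (η (x - s)) - Real.sqrt (η x)) ^ 2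
          = (Real.sqrt (η x) - Real.sqrt (η (x - s))) ^ 2 := by ring
      have h3 : x - (x - s) = s := by ring
      rw [h3] at h1
      simpa only [hG', h2] using h1
    calc ENNReal.ofReal (G' x)
        ≤ ENNReal.ofReal (s / 4 * ∫ t in Set.Ioc (x - s) x, q t) := ENNReal.ofReal_le_ofReal hpt
      _ = ENNReal.ofReal (s / 4) * ENNReal.ofReal (∫ t in Set.Ioc (x - s) x, q t) :=
          ENNReal.ofReal_mul (by positivity)
      _ = ENNReal.ofReal (s / 4) * ∫⁻ t in Set.Ioc (x - s) x, qe t := by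
          rw [ofReal_integral_eq_lintegral_ofReal hqint
            (Filter.Eventually.of_forall (fun t => hq_nn t))]
      _ = ENNReal.ofReal (s / 4) * ∫⁻ t, (Set.Ioc (x - s) x).indicator qe t := by
          rw [lintegral_indicator measurableSet_Ioc]
  have hswap : ∫⁻ x in Set.Ici s, (∫⁻ t, (Set.Ioc (x - s) x).indicator qe t)
      = ∫⁻ t, ∫⁻ x in Set.Ici s, (Set.Ioc (x - s) x).indicator qe t := by
    apply lintegral_lintegral_swap
    have hFm : Measurable (fun p : ℝ × ℝ => (Set.Ioc (p.1 - s) p.1).indicator qe p.2) := by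
      have heq : (fun p : ℝ × ℝ => (Set.Ioc (p.1 - s) p.1).indicator qe p.2)
          = Set.indicator {p : ℝ × ℝ | p.1 - s < p.2 ∧ p.2 ≤ p.1} (fun p => qe p.2) := by
        funext p
        simp [Set.indicator_apply, Set.mem_Ioc, Set.mem_setOf_eq]
      rw [heq]
      apply Measurable.indicator
      · exact (ENNReal.measurable_ofReal.comp hq_meas).comp measurable_snd
      · exact ((measurableSet_lt (measurable_fst.sub measurable_const) measurable_snd).inter
          (measurableSet_le measurable_snd measurable_fst))
    exact hFm.aemeasurable
  have hinner : ∀ t : ℝ, ∫⁻ x in Set.Ici s, (Set.Ioc (x - s) x).indicator qe t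
      ≤ (Set.Ioi (0:ℝ)).indicator (fun t => qe t * ENNReal.ofReal s) t := by
    intro t
    have hrw : ∀ x : ℝ, (Set.Ioc (x - s) x).indicator qe t
        = (Set.Ico t (t + s)).indicator (fun _ => qe t) x := by
      intro x
      rw [Set.indicator_apply, Set.indicator_apply]
      refine if_congr ?_ rfl rfl
      simp only [Set.mem_Ioc, Set.mem_Ico]
      constructor <;> rintro ⟨h1, h2⟩ <;> constructor <;> linarith
    simp_rw [hrw]
    rw [lintegral_indicator_const measurableSet_Ico]
    by_cases ht : 0 < t
    · rw [Set.indicator_of_mem (Set.mem_Ioi.mpr ht)]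
      apply mul_le_mul_right
      rw [Measure.restrict_apply measurableSet_Ico]
      calc volume (Set.Ico t (t + s) ∩ Set.Ici s)
          ≤ volume (Set.Ico t (t + s)) := measure_mono Set.inter_subset_left
        _ = ENNReal.ofReal s := by rw [Real.volume_Ico, add_sub_cancel_left]
    · rw [Set.indicator_of_notMem (by simpa using ht)]
      have hempty : Set.Ico t (t + s) ∩ Set.Ici s = ∅ := by
        ext x
        simp only [Set.mem_inter_iff, Set.mem_Ico, Set.mem_Ici, Set.mem_empty_iff_false,
          iff_false, not_and, and_imp]
        intro h1 h2 h3
        push_neg at ht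
        linarith
      rw [Measure.restrict_apply measurableSet_Ico, hempty, measure_empty, mul_zero]
  have hlast : ∫⁻ t, (Set.Ioi (0:ℝ)).indicator (fun t => qe t * ENNReal.ofReal s) t
      = ENNReal.ofReal I * ENNReal.ofReal s := by
    rw [lintegral_indicator measurableSet_Ioi]
    rw [lintegral_mul_const' _ _ ENNReal.ofReal_ne_top]
    rw [← ofReal_integral_eq_lintegral_ofReal hint2
      (Filter.Eventually.of_forall (fun t => hq_nn t))]
  calc ∫⁻ x in Set.Ici s, ENNReal.ofReal (G' x)
      ≤ ENNReal.ofReal (s / 4) *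
        ∫⁻ x in Set.Ici s, (∫⁻ t, (Set.Ioc (x - s) x).indicator qe t) := hstep1
    _ = ENNReal.ofReal (s / 4) *
        ∫⁻ t, ∫⁻ x in Set.Ici s, (Set.Ioc (x - s) x).indicator qe t := by rw [hswap]
    _ ≤ ENNReal.ofReal (s / 4) *
        ∫⁻ t, (Set.Ioi (0:ℝ)).indicator (fun t => qe t * ENNReal.ofReal s) t :=
          mul_le_mul_right (lintegral_mono (fun t => hinner t)) _
    _ = ENNReal.ofReal (s / 4) * (ENNReal.ofReal I * ENNReal.ofReal s) := by rw [hlast]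
    _ = ENNReal.ofReal (s ^ 2 * (I / 4)) := by
        rw [← ENNReal.ofReal_mul hI_nn, ← ENNReal.ofReal_mul (by positivity)]
        congr 1
        ring

lemma core (hnn : ∀ x, 0 ≤ η x) (hdiff : Differentiable ℝ η)
    (hdens : ∫ x in Set.Ici (0 : ℝ), η x = 1)
    (hint1 : IntegrableOn (fun x => |deriv η x|) (Set.Ioi 0) volume)
    (hint2 : IntegrableOn (fun x => (deriv η x) ^ 2 / η x) (Set.Ioi 0) volume)
    {s : ℝ} (hs : 0 ≤ s) :
    ∫ x, (Real.sqrt (locDens η s x) - Real.sqrt (locDens η 0 x)) ^ 2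
      ≤ 2 * η 0 * s + s ^ 2 * ((∫ t in Set.Ioi (0:ℝ), (deriv η t) ^ 2 / η t) / 2) := by
  have hηc : Continuous η := hdiff.continuous
  set q : ℝ → ℝ := fun t => (deriv η t) ^ 2 / η t with hq
  have hq_nn : ∀ t, 0 ≤ q t := fun t => div_nonneg (sq_nonneg _) (hnn t)
  set I : ℝ := ∫ t in Set.Ioi (0:ℝ), q t with hI
  have hI_nn : 0 ≤ I := setIntegral_nonneg measurableSet_Ioi (fun t _ => hq_nn t)
  have hη_Ici : IntegrableOn η (Set.Ici 0) volume := by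
    by_contra hc
    rw [integral_undef hc] at hdens
    norm_num at hdens
  have hlocnn : ∀ θ x, 0 ≤ locDens η θ x := by
    intro θ x
    unfold locDens
    split
    · exact hnn _
    · exact le_rfl
  have hBeq : locDens η 0 = (Set.Ici (0:ℝ)).indicator η := by
    funext x
    simp [locDens, Set.indicator_apply, Set.mem_Ici]
  have hB_int : Integrable (locDens η 0) := by
    rw [hBeq]
    exact (integrable_indicator_iff measurableSet_Ici).mpr hη_Ici
  have hAeq : locDens η s = fun x => locDens η 0 (x - s) := by
    funext x
    simp only [locDens, sub_zero, sub_nonneg]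
  have hA_int : Integrable (locDens η s) := by
    rw [hAeq]
    exact hB_int.comp_sub_right s
  have hlm : ∀ θ, Measurable (locDens η θ) := by
    intro θ
    apply Measurable.ite (measurableSet_le measurable_const measurable_id)
    · exact hηc.measurable.comp (measurable_id.sub_const θ)
    · exact measurable_const
  set G : ℝ → ℝ := fun x => (Real.sqrt (locDens η s x) - Real.sqrt (locDens η 0 x)) ^ 2
    with hG
  have hG_meas : Measurable G :=
    (((Real.continuous_sqrt.measurable.comp (hlm s)).sub
      (Real.continuous_sqrt.measurable.comp (hlm 0))).pow_const 2)
  have hGle : ∀ x, G x ≤ 2 * locDens η s x + 2 * locDens η 0 x := by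
    intro x
    have h1 : Real.sqrt (locDens η s x) ^ 2 = locDens η s x := Real.sq_sqrt (hlocnn s x)
    have h2 : Real.sqrt (locDens η 0 x) ^ 2 = locDens η 0 x := Real.sq_sqrt (hlocnn 0 x)
    have h3 := sq_nonneg (Real.sqrt (locDens η s x) + Real.sqrt (locDens η 0 x))
    simp only [hG]
    nlinarith
  have hG_int : Integrable G := by
    apply Integrable.mono' ((hA_int.const_mul 2).add (hB_int.const_mul 2))
      hG_meas.aestronglyMeasurable
    refine Filter.Eventually.of_forall (fun x => ?_)
    rw [Real.norm_eq_abs, abs_of_nonneg (sq_nonneg _)]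
    exact hGle x
  -- split the integral
  have hdisj1 : Disjoint (Set.Iio (0:ℝ)) (Set.Ico 0 s) :=
    (Set.Iio_disjoint_Ici le_rfl).mono_right Set.Ico_subset_Ici_self
  have hsplit : ∫ x, G x = (∫ x in Set.Iio 0, G x) +
      ((∫ x in Set.Ico 0 s, G x) + ∫ x in Set.Ici s, G x) := by
    rw [← setIntegral_univ, ← Set.Iio_union_Ici (a := s),
      setIntegral_union (Set.Iio_disjoint_Ici le_rfl) measurableSet_Ici
        hG_int.integrableOn hG_int.integrableOn,
      ← Set.Iio_union_Ico_eq_Iio hs,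
      setIntegral_union hdisj1 measurableSet_Ico hG_int.integrableOn hG_int.integrableOn]
    ring
  have hIio : ∫ x in Set.Iio 0, G x = 0 := by
    rw [setIntegral_congr_fun measurableSet_Iio (g := fun _ => (0:ℝ))
      (fun x hx => by
        rw [Set.mem_Iio] at hx
        simp [hG, locDens, not_le.mpr (lt_of_lt_of_le hx hs), not_le.mpr hx])]
    simp
  have hIcoEq : ∫ x in Set.Ico 0 s, G x = ∫ x in Set.Ico 0 s, η x := by
    apply setIntegral_congr_fun measurableSet_Ico
    intro x hx
    rcases hx with ⟨hx1, hx2⟩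
    simp only [hG, locDens, if_neg (not_le.mpr hx2), if_pos hx1, sub_zero,
      Real.sqrt_zero, zero_sub, neg_sq]
    exact Real.sq_sqrt (hnn x)
  -- pointwise bound on [0, s)
  have hbnd : ∀ x : ℝ, 0 ≤ x → η x ≤ 2 * η 0 + x * (I / 2) := by
    intro x hx
    have h1 := sqrt_diff_sq_le hnn hdiff hint1 hint2 (le_refl (0:ℝ)) hx
    rw [sub_zero] at h1
    have h2 : ∫ t in Set.Ioc 0 x, q t ≤ I := by
      apply setIntegral_mono_set hint2
        (Filter.Eventually.of_forall (fun t => hq_nn t))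
      exact HasSubset.Subset.eventuallyLE Set.Ioc_subset_Ioi_self
    have hR_nn : 0 ≤ ∫ t in Set.Ioc 0 x, q t :=
      setIntegral_nonneg measurableSet_Ioc (fun t _ => hq_nn t)
    have h3 : x / 4 * (∫ t in Set.Ioc 0 x, q t) ≤ x / 4 * I :=
      mul_le_mul_of_nonneg_left h2 (by linarith)
    have h4 : Real.sqrt (η x) ^ 2 = η x := Real.sq_sqrt (hnn x)
    have h5 : Real.sqrt (η 0) ^ 2 = η 0 := Real.sq_sqrt (hnn 0)
    nlinarith [sq_nonneg (Real.sqrt (η x) - 2 * Real.sqrt (η 0))]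
  have hIco_bound : ∫ x in Set.Ico 0 s, η x ≤ 2 * η 0 * s + s ^ 2 * (I / 4) := by
    have hcont : Continuous (fun x : ℝ => 2 * η 0 + x * (I / 2)) :=
      continuous_const.add (continuous_id.mul continuous_const)
    calc ∫ x in Set.Ico 0 s, η x
        ≤ ∫ x in Set.Ico 0 s, (2 * η 0 + x * (I / 2)) := by
          apply setIntegral_mono_on (hη_Ici.mono_set Set.Ico_subset_Ici_self)
            (hcont.integrableOn_Icc.mono_set Set.Ico_subset_Icc_self)
            measurableSet_Ico
          exact fun x hx => hbnd x hx.1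
      _ = 2 * η 0 * s + s ^ 2 * (I / 4) := by
          rw [integral_Ico_eq_integral_Ioo, ← integral_Ioc_eq_integral_Ioo,
            ← intervalIntegral.integral_of_le hs]
          have h1 : IntervalIntegrable (fun x : ℝ => x * (I / 2)) volume 0 s :=
            (continuous_id.mul continuous_const).intervalIntegrable _ _
          rw [intervalIntegral.integral_add intervalIntegrable_const h1,
            intervalIntegral.integral_const, intervalIntegral.integral_mul_const,
            integral_id]
          simp
          ring
  -- tail
  have hEqOn : Set.EqOn G (fun x => (Real.sqrt (η (x - s)) - Real.sqrt (η x)) ^ 2)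
      (Set.Ici s) := by
    intro x hx
    rw [Set.mem_Ici] at hx
    have hx0 : (0:ℝ) ≤ x := le_trans hs hx
    simp only [hG, locDens, if_pos hx, if_pos hx0, sub_zero]
  have hIciEq : ∫ x in Set.Ici s, G x
      = ∫ x in Set.Ici s, (Real.sqrt (η (x - s)) - Real.sqrt (η x)) ^ 2 :=
    setIntegral_congr_fun measurableSet_Ici hEqOn
  have htail := tail_bound hnn hdiff hint1 hint2 hs
    (hG_int.integrableOn.congr_fun hEqOn measurableSet_Ici)
  rw [hsplit, hIio, hIcoEq, hIciEq]
  linarith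

/-- Hellinger bound in the location model: for a differentiable density `η` on
`[0,∞)` with integrable `η'` and finite Fisher information, and `0 ≤ h ≤ M`,
`H²(p_{θ₀+h/n}, p_{θ₀}) ≤ 2η(0)M/n + 2(M²/n²)(∫|η'| + ∫(η')²/η)`. -/
theorem stmt_7 (η : ℝ → ℝ) (hnn : ∀ x, 0 ≤ η x) (hdiff : Differentiable ℝ η)
    (hdens : ∫ x in Set.Ici (0 : ℝ), η x = 1)
    (hint1 : IntegrableOn (fun x => |deriv η x|) (Set.Ioi 0) volume)
    (hint2 : IntegrableOn (fun x => (deriv η x) ^ 2 / η x) (Set.Ioi 0) volume)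
    (θ₀ M : ℝ) (hM : 0 < M) (n : ℕ) (hn : 1 ≤ n)
    (h : ℝ) (hh0 : 0 ≤ h) (hhM : h ≤ M) :
    ∫ x, (Real.sqrt (locDens η (θ₀ + h / n) x) - Real.sqrt (locDens η θ₀ x)) ^ 2 ≤
      2 * η 0 * M / n +
        2 * (M ^ 2 / (n : ℝ) ^ 2) *
          ((∫ x in Set.Ioi (0 : ℝ), |deriv η x|) +
            ∫ x in Set.Ioi (0 : ℝ), (deriv η x) ^ 2 / η x) := by
  have hN : (0:ℝ) < (n : ℝ) := by exact_mod_cast Nat.pos_of_ne_zero (by omega)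
  set s : ℝ := h / n with hsdef
  have hs0 : 0 ≤ s := div_nonneg hh0 hN.le
  have hsM : s ≤ M / n := by
    exact (div_le_div_iff_of_pos_right hN).mpr hhM
  -- translation
  have htrans : ∀ x : ℝ, (Real.sqrt (locDens η (θ₀ + s) x) - Real.sqrt (locDens η θ₀ x)) ^ 2
      = (Real.sqrt (locDens η s (x - θ₀)) - Real.sqrt (locDens η 0 (x - θ₀))) ^ 2 := by
    intro x
    have h1 : locDens η (θ₀ + s) x = locDens η s (x - θ₀) := by
      simp only [locDens]
      rcases le_or_gt (θ₀ + s) x with hc | hc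
      · rw [if_pos hc, if_pos (by linarith), show x - (θ₀ + s) = x - θ₀ - s by ring]
      · rw [if_neg (not_le.mpr hc), if_neg (not_le.mpr (by linarith))]
    have h2 : locDens η θ₀ x = locDens η 0 (x - θ₀) := by
      simp only [locDens, sub_zero]
      rcases le_or_gt θ₀ x with hc | hc
      · rw [if_pos hc, if_pos (by linarith)]
      · rw [if_neg (not_le.mpr hc), if_neg (not_le.mpr (by linarith))]
    rw [h1, h2]
  simp_rw [htrans]
  rw [integral_sub_right_eq_self
    (fun y => (Real.sqrt (locDens η s y) - Real.sqrt (locDens η 0 y)) ^ 2) θ₀]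
  have hcore := core hnn hdiff hdens hint1 hint2 hs0
  set I : ℝ := ∫ t in Set.Ioi (0:ℝ), (deriv η t) ^ 2 / η t with hI
  set J : ℝ := ∫ t in Set.Ioi (0:ℝ), |deriv η t| with hJ
  have hI_nn : 0 ≤ I :=
    setIntegral_nonneg measurableSet_Ioi (fun t _ => div_nonneg (sq_nonneg _) (hnn t))
  have hJ_nn : 0 ≤ J := setIntegral_nonneg measurableSet_Ioi (fun t _ => abs_nonneg _)
  have hfin : 2 * η 0 * s + s ^ 2 * (I / 2)
      ≤ 2 * η 0 * M / n + 2 * (M ^ 2 / (n:ℝ) ^ 2) * (J + I) := by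
    have hη0 : 0 ≤ η 0 := hnn 0
    have hsq : s ^ 2 ≤ (M / n) ^ 2 := by
      apply pow_le_pow_left₀ hs0 hsM
    have hMn : (M / n) ^ 2 = M ^ 2 / (n:ℝ) ^ 2 := by rw [div_pow]
    rw [hMn] at hsq
    have hP : (0:ℝ) ≤ M ^ 2 / (n:ℝ) ^ 2 := by positivity
    have h1 : 2 * η 0 * s ≤ 2 * η 0 * (M / n) :=
      mul_le_mul_of_nonneg_left hsM (by linarith)
    have h2 : s ^ 2 * (I / 2) ≤ (M ^ 2 / (n:ℝ) ^ 2) * (I / 2) :=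
      mul_le_mul_of_nonneg_right hsq (by linarith)
    have h3 : (M ^ 2 / (n:ℝ) ^ 2) * (I / 2) ≤ 2 * (M ^ 2 / (n:ℝ) ^ 2) * (J + I) := by
      nlinarith
    have h4 : 2 * η 0 * (M / n) = 2 * η 0 * M / n := by ring
    linarith
  linarith
end

section
/- Suppose a family of densities satisfies the log-Lipschitz bound p_{θ,η}(x)/p_{θ₀,η}(x) ≤ e^{m(x)|θ−θ₀|} on the support of p_{θ₀,η}, where E_{θ₀,η}[e^{K·m(X)}] < ∞ for all K > 0. Then for any stochastic sequence (h_n) bounded by M, the expectation under P_{θ₀,η}ⁿ of the likelihood ratio ∏_{i=1}^n p_{θ₀+h_n/n, η}(X_i)/p_{θ₀,η}(X_i) is bounded by E_{θ₀,η}[e^{M·m(X)}], uniformly in n. -/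
open MeasureTheory ProbabilityTheory

lemma pi_map_eval_aux {X : Type*} [MeasurableSpace X] (μ : Measure X) [IsProbabilityMeasure μ]
    (n : ℕ) (i : Fin n) :
    MeasurePreserving (fun x : Fin n → X => x i) (Measure.pi fun _ => μ) μ := by
  refine ⟨measurable_pi_apply i, ?_⟩
  ext s hs
  rw [Measure.map_apply (measurable_pi_apply i) hs]
  rw [show (fun x : Fin n → X => x i) ⁻¹' s = Function.eval i ⁻¹' s from rfl,
    Set.eval_preimage, Measure.pi_pi]
  have : ∀ j, μ (Function.update (fun _ => Set.univ) i s j) =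
      if j = i then μ s else 1 := by
    intro j
    by_cases hj : j = i <;> simp [Function.update, hj]
  simp only [this]
  rw [Finset.prod_ite_eq' Finset.univ i (fun _ => μ s)]
  simp

/-- Domination under a log-Lipschitz bound: if the likelihood ratios
`r θ x = p_{θ,η}(x)/p_{θ₀,η}(x)` satisfy `r θ x ≤ exp(m(x)|θ−θ₀|)` with
`E[e^{K·m}] < ∞` for all `K > 0`, then for any stochastic sequence `h` bounded
by `M`, the expectation under `P_{θ₀,η}ⁿ` of `∏ᵢ r(θ₀ + h/n)(Xᵢ)` is bounded by
`E[e^{M·m}]`, uniformly in `n`. -/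
theorem stmt_10 {X : Type*} [MeasurableSpace X] (μ : Measure X) [IsProbabilityMeasure μ]
    (θ₀ M : ℝ) (hM : 0 < M)
    (m : X → ℝ) (hmmeas : Measurable m) (hmpos : ∀ x, 0 < m x)
    (r : ℝ → X → ℝ) (hr0 : ∀ θ x, 0 ≤ r θ x)
    (hlip : ∀ θ x, r θ x ≤ Real.exp (m x * |θ - θ₀|))
    (hintK : ∀ K : ℝ, 0 < K → Integrable (fun x => Real.exp (K * m x)) μ)
    (n : ℕ) (hn : 1 ≤ n)
    (h : (Fin n → X) → ℝ) (hb : ∀ x, |h x| ≤ M) :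
    ∫ x : Fin n → X, (∏ i, r (θ₀ + h x / n) (x i)) ∂(Measure.pi fun _ => μ) ≤
      ∫ x, Real.exp (M * m x) ∂μ := by
  have hnpos : (0 : ℝ) < n := by exact_mod_cast Nat.lt_of_lt_of_le Nat.zero_lt_one hn
  set ν := Measure.pi (fun _ : Fin n => μ) with hν
  have hmp : ∀ i : Fin n, MeasurePreserving (fun x : Fin n → X => x i) ν μ :=
    fun i => pi_map_eval_aux μ n i
  have hint : Integrable (fun x => Real.exp (M * m x)) μ := hintK M hM
  have hgi : ∀ i : Fin n, Integrable (fun x : Fin n → X => Real.exp (M * m (x i))) ν :=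
    fun i => ((hmp i).integrable_comp hint.1).2 hint
  have hg : Integrable (fun x : Fin n → X => ∑ i, (1 / (n : ℝ)) * Real.exp (M * m (x i))) ν :=
    integrable_finset_sum _ fun i _ => (hgi i).const_mul _
  have key : ∀ x : Fin n → X,
      (∏ i, r (θ₀ + h x / n) (x i)) ≤ ∑ i, (1 / (n : ℝ)) * Real.exp (M * m (x i)) := by
    intro x
    have habs : |θ₀ + h x / n - θ₀| = |h x| / n := by
      rw [add_sub_cancel_left, abs_div, abs_of_pos hnpos]
    calc ∏ i, r (θ₀ + h x / n) (x i)
        ≤ ∏ i, Real.exp (m (x i) * |θ₀ + h x / n - θ₀|) :=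
          Finset.prod_le_prod (fun i _ => hr0 _ _) (fun i _ => hlip _ _)
      _ = Real.exp (∑ i, m (x i) * |θ₀ + h x / n - θ₀|) := (Real.exp_sum _ _).symm
      _ ≤ Real.exp (∑ i, (1 / (n : ℝ)) • (M * m (x i))) := by
          apply Real.exp_le_exp.2
          apply Finset.sum_le_sum
          intro i _
          rw [habs, smul_eq_mul]
          rw [show (1:ℝ)/n * (M * m (x i)) = m (x i) * (M / n) by ring]
          have := hb x
          gcongr
          exact (hmpos _).le
      _ ≤ ∑ i, (1 / (n : ℝ)) • Real.exp (M * m (x i)) := by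
          apply convexOn_exp.map_sum_le
          · intro i _; positivity
          · simp [Finset.sum_const, Finset.card_univ]
            field_simp
          · intro i _; trivial
      _ = ∑ i, (1 / (n : ℝ)) * Real.exp (M * m (x i)) := by simp [smul_eq_mul]
  have hmono : ∫ x : Fin n → X, (∏ i, r (θ₀ + h x / n) (x i)) ∂ν ≤
      ∫ x : Fin n → X, (∑ i, (1 / (n : ℝ)) * Real.exp (M * m (x i))) ∂ν := by
    apply integral_mono_of_nonneg
    · exact Filter.Eventually.of_forall fun x => Finset.prod_nonneg fun i _ => hr0 _ _
    · exact hg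
    · exact Filter.Eventually.of_forall key
  refine hmono.trans ?_
  have heach : ∀ i : Fin n,
      ∫ x : Fin n → X, Real.exp (M * m (x i)) ∂ν = ∫ x, Real.exp (M * m x) ∂μ := by
    intro i
    rw [← (hmp i).map_eq]
    exact (integral_map (hmp i).measurable.aemeasurable
      ((Real.measurable_exp.comp (hmmeas.const_mul M)).aestronglyMeasurable)).symm
  rw [integral_finset_sum _ fun i _ => (hgi i).const_mul _]
  simp_rw [integral_const_mul, heach]
  rw [Finset.sum_const, Finset.card_univ, Fintype.card_fin, nsmul_eq_mul]
  field_simp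
  exact le_refl _
end

section
/- Suppose p_{θ,η}/p_{θ₀,η}(x) ≤ e^{m(x)|θ−θ₀|} on the support of p_{θ₀,η}, with E_{θ₀,η}[e^{qM·m(X)}] < ∞ for some q > 1 and all M > 0. Then for any sequence of events F_n with P_{θ₀,η}ⁿ(F_n) → 0 and any stochastic (h_n) bounded by M, also P_{θ₀+h_n/n, η}ⁿ(F_n) → 0 (i.e., the sequence P_{θ₀+h_n/n,η}ⁿ is contiguous with respect to P_{θ₀,η}ⁿ). -/
open MeasureTheory ProbabilityTheory Filter

/-- On a finite power of a sigma-finite measure, a product of copies of one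
integrable function is integrable. -/
lemma pi_integrable_prod {X : Type*} [MeasurableSpace X] (μ : Measure X) [SigmaFinite μ]
    (n : ℕ) (f : X → ℝ) (hf : Integrable f μ) :
    Integrable (fun x : Fin n → X => ∏ i, f (x i)) (Measure.pi fun _ => μ) := by
  letI : MeasureSpace X := ⟨μ⟩
  haveI : SigmaFinite (volume : Measure X) := ‹SigmaFinite μ›
  have : (Measure.pi fun _ : Fin n => μ) = (volume : Measure (Fin n → X)) := rfl
  rw [this]
  exact Integrable.fintype_prod (f := fun _ : Fin n => f) fun _ => hf

/-- Fubini for a power: the integral of a product of copies of one function is the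
`n`-th power of the integral. -/
lemma pi_integral_pow {X : Type*} [MeasurableSpace X] (μ : Measure X) [SigmaFinite μ]
    (n : ℕ) (f : X → ℝ) :
    ∫ x : Fin n → X, ∏ i, f (x i) ∂(Measure.pi fun _ => μ) = (∫ y, f y ∂μ) ^ n := by
  letI : MeasureSpace X := ⟨μ⟩
  haveI : SigmaFinite (volume : Measure X) := ‹SigmaFinite μ›
  have : (Measure.pi fun _ : Fin n => μ) = (volume : Measure (Fin n → X)) := rfl
  rw [this]
  exact (MeasureTheory.integral_fintype_prod_eq_pow (ι := Fin n) (μ := μ) f).trans (by simp)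

/-- Convexity of `exp`: `exp (a / n) ≤ 1 - 1/n + (1/n) * exp a`. -/
lemma exp_div_le_convex {a : ℝ} {n : ℕ} (hn : 1 ≤ n) :
    Real.exp (a / n) ≤ 1 - 1 / (n : ℝ) + 1 / (n : ℝ) * Real.exp a := by
  have hn' : (1 : ℝ) ≤ n := by exact_mod_cast hn
  have h0 : (0 : ℝ) ≤ 1 / (n : ℝ) := by positivity
  have h1 : (0 : ℝ) ≤ 1 - 1 / (n : ℝ) := by
    rw [sub_nonneg]
    exact div_le_one_of_le₀ hn' (by positivity)
  have hc := convexOn_exp.2 (Set.mem_univ (0 : ℝ)) (Set.mem_univ a) h1 h0 (by ring)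
  simp only [smul_eq_mul, mul_zero, zero_add, Real.exp_zero, mul_one] at hc
  calc Real.exp (a / n) = Real.exp (1 / (n : ℝ) * a) := by rw [one_div, inv_mul_eq_div]
    _ ≤ 1 - 1 / (n : ℝ) + 1 / (n : ℝ) * Real.exp a := hc

/-- One-sided contiguity under a log-Lipschitz bound: if the likelihood ratios
`r θ x = p_{θ,η}(x)/p_{θ₀,η}(x)` satisfy `r θ x ≤ exp(m(x)|θ−θ₀|)` with
`E[e^{qM·m}] < ∞` for some `q > 1`, and `P_{θ₀,η}ⁿ(Fₙ) → 0`, then also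
`P_{θ₀+hₙ/n,η}ⁿ(Fₙ) = ∫_{Fₙ} ∏ᵢ r(θ₀+hₙ/n)(Xᵢ) dP_{θ₀,η}ⁿ → 0` for any
stochastic sequence `hₙ` bounded by `M`. -/
theorem stmt_11 {X : Type*} [MeasurableSpace X] (μ : Measure X) [IsProbabilityMeasure μ]
    (θ₀ M q : ℝ) (hM : 0 < M) (hq : 1 < q)
    (m : X → ℝ) (hmmeas : Measurable m) (hmpos : ∀ x, 0 < m x)
    (r : ℝ → X → ℝ) (hr0 : ∀ θ x, 0 ≤ r θ x)
    (hrmeas : ∀ θ, Measurable (r θ))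
    (hlip : ∀ θ x, r θ x ≤ Real.exp (m x * |θ - θ₀|))
    (hint : Integrable (fun x => Real.exp (q * M * m x)) μ)
    (F : (n : ℕ) → Set (Fin n → X)) (hF : ∀ n, MeasurableSet (F n))
    (h : (n : ℕ) → (Fin n → X) → ℝ) (hb : ∀ n x, |h n x| ≤ M)
    (hF0 : Tendsto (fun n => (Measure.pi fun _ : Fin n => μ) (F n)) atTop (nhds 0)) :
    Tendsto
      (fun n => ∫ x in F n, (∏ i, r (θ₀ + h n x / n) (x i)) ∂(Measure.pi fun _ : Fin n => μ))
      atTop (nhds 0) := by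
  have hq0 : 0 < q := lt_trans one_pos hq
  set C : ℝ := ∫ x, Real.exp (q * M * m x) ∂μ with hC
  have hC1 : 1 ≤ C := by
    calc (1 : ℝ) = ∫ _x, (1 : ℝ) ∂μ := by simp
      _ ≤ C := by
        apply integral_mono (integrable_const 1) hint
        intro x
        simpa using Real.one_le_exp (mul_nonneg (mul_nonneg hq0.le hM.le) (hmpos x).le)
  set p : ℝ := Real.conjExponent q with hp
  have hpq : p.HolderConjugate q := (Real.HolderConjugate.conjExponent hq).symm
  have hppos : 0 < p := hpq.pos
  -- integrability of exp(q M m / n)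
  have hf1int : ∀ n : ℕ, 1 ≤ n → Integrable (fun y => Real.exp (q * M * m y / n)) μ := by
    intro n hn
    have hn' : (1 : ℝ) ≤ n := by exact_mod_cast hn
    apply Integrable.mono' hint
    · exact ((hmmeas.const_mul (q * M)).div_const _).exp.aestronglyMeasurable
    · filter_upwards with y
      rw [Real.norm_eq_abs, Real.abs_exp, Real.exp_le_exp]
      have hmy : 0 ≤ q * M * m y := mul_nonneg (mul_nonneg hq0.le hM.le) (hmpos y).le
      calc q * M * m y / n ≤ q * M * m y / 1 := by
            apply div_le_div_of_nonneg_left hmy one_pos hn'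
        _ = q * M * m y := by ring
  -- the key power bound
  have hpow : ∀ n : ℕ, 1 ≤ n →
      (∫ y, Real.exp (q * M * m y / n) ∂μ) ^ n ≤ Real.exp (C - 1) := by
    intro n hn
    have hn0 : (n : ℝ) ≠ 0 := by positivity
    have hEn : (∫ y, Real.exp (q * M * m y / n) ∂μ) ≤ (C - 1) / n + 1 := by
      have hle : (∫ y, Real.exp (q * M * m y / n) ∂μ)
          ≤ ∫ y, (1 - 1 / (n : ℝ) + 1 / (n : ℝ) * Real.exp (q * M * m y)) ∂μ := by
        apply integral_mono (hf1int n hn) ((integrable_const _).add (hint.const_mul _))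
        intro y
        exact exp_div_le_convex hn
      have : ∫ y, (1 - 1 / (n : ℝ) + 1 / (n : ℝ) * Real.exp (q * M * m y)) ∂μ
          = (1 - 1 / (n : ℝ)) + 1 / (n : ℝ) * C := by
        rw [integral_add (integrable_const _) (hint.const_mul _), integral_const,
          integral_const_mul, ← hC]
        simp [measure_univ]
      rw [this] at hle
      calc (∫ y, Real.exp (q * M * m y / n) ∂μ) ≤ (1 - 1 / (n : ℝ)) + 1 / (n : ℝ) * C := hle
        _ = (C - 1) / n + 1 := by field_simp; ring
    have hnonneg : 0 ≤ ∫ y, Real.exp (q * M * m y / n) ∂μ :=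
      integral_nonneg fun y => (Real.exp_pos _).le
    calc (∫ y, Real.exp (q * M * m y / n) ∂μ) ^ n ≤ (Real.exp ((C - 1) / n)) ^ n := by
          apply pow_le_pow_left₀ hnonneg
          exact hEn.trans (Real.add_one_le_exp _)
      _ = Real.exp (C - 1) := by
          rw [← Real.exp_nat_mul, mul_div_cancel₀ _ hn0]
  -- the key per-n bound via Young's inequality
  have key : ∀ t : ℝ, 0 < t → ∀ n : ℕ, 1 ≤ n →
      (∫ x in F n, (∏ i, r (θ₀ + h n x / n) (x i)) ∂(Measure.pi fun _ : Fin n => μ))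
        ≤ t ^ p / p * ((Measure.pi fun _ : Fin n => μ) (F n)).toReal
          + Real.exp (C - 1) / (q * t ^ q) := by
    intro t ht n hn
    have hn' : (1 : ℝ) ≤ n := by exact_mod_cast hn
    set ν : Measure (Fin n → X) := Measure.pi fun _ : Fin n => μ with hνdef
    set f1 : X → ℝ := fun y => Real.exp (q * M * m y / n) with hf1
    set G : (Fin n → X) → ℝ :=
      fun x => (F n).indicator (fun _ => t ^ p / p) x + (∏ i, f1 (x i)) / (q * t ^ q) with hG
    have hGnonneg : ∀ x, 0 ≤ G x := by
      intro x
      apply add_nonneg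
      · exact Set.indicator_nonneg (fun _ _ => by positivity) x
      · exact div_nonneg (Finset.prod_nonneg fun i _ => (Real.exp_pos _).le) (by positivity)
    have hGint : Integrable G ν :=
      ((integrable_const _).indicator (hF n)).add
        ((pi_integrable_prod μ n f1 (hf1int n hn)).div_const _)
    have hmono : ∀ x, (F n).indicator (fun x => ∏ i, r (θ₀ + h n x / n) (x i)) x ≤ G x := by
      intro x
      by_cases hx : x ∈ F n
      · rw [Set.indicator_of_mem hx]
        set θ : ℝ := θ₀ + h n x / n with hθ
        have hd : |θ - θ₀| ≤ M / n := by
          have : θ - θ₀ = h n x / n := by rw [hθ]; ring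
          rw [this, abs_div, abs_of_nonneg (by positivity : (0:ℝ) ≤ (n:ℝ))]
          gcongr
          · exact hb n x
        set S : ℝ := ∑ i, m (x i) * (M / n) with hS
        have step1 : (∏ i, r θ (x i)) ≤ Real.exp S := by
          rw [hS, Real.exp_sum]
          apply Finset.prod_le_prod (fun i _ => hr0 _ _)
          intro i _
          refine (hlip θ (x i)).trans ?_
          rw [Real.exp_le_exp]
          exact mul_le_mul_of_nonneg_left hd (hmpos (x i)).le
        have hprod : Real.exp S ^ q = ∏ i, f1 (x i) := by
          rw [← Real.exp_mul, hf1]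
          rw [← Real.exp_sum]
          congr 1
          rw [hS, Finset.sum_mul]
          apply Finset.sum_congr rfl
          intro i _
          field_simp
        have young : Real.exp S ≤ t ^ p / p + Real.exp S ^ q / (q * t ^ q) := by
          have h1 : Real.exp S = t * (Real.exp S / t) := by field_simp
          have h2 := Real.young_inequality_of_nonneg ht.le
            (div_nonneg (Real.exp_pos S).le ht.le) hpq
          rw [Real.div_rpow (Real.exp_pos S).le ht.le] at h2
          calc Real.exp S = t * (Real.exp S / t) := h1
            _ ≤ t ^ p / p + Real.exp S ^ q / t ^ q / q := h2
            _ = t ^ p / p + Real.exp S ^ q / (q * t ^ q) := by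
                rw [div_div, mul_comm]
        calc (∏ i, r θ (x i)) ≤ Real.exp S := step1
          _ ≤ t ^ p / p + Real.exp S ^ q / (q * t ^ q) := young
          _ = G x := by rw [hG]; simp only [Set.indicator_of_mem hx, hprod]
      · rw [Set.indicator_of_notMem hx]
        exact hGnonneg x
    have hind : (∫ x in F n, (∏ i, r (θ₀ + h n x / n) (x i)) ∂ν)
        = ∫ x, (F n).indicator (fun x => ∏ i, r (θ₀ + h n x / n) (x i)) x ∂ν :=
      (integral_indicator (hF n)).symm
    rw [hind]
    calc ∫ x, (F n).indicator (fun x => ∏ i, r (θ₀ + h n x / n) (x i)) x ∂ν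
        ≤ ∫ x, G x ∂ν := by
          apply integral_mono_of_nonneg ?_ hGint (Filter.Eventually.of_forall hmono)
          filter_upwards with x
          exact Set.indicator_nonneg
            (fun y _ => Finset.prod_nonneg fun i _ => hr0 _ _) x
      _ = t ^ p / p * (ν (F n)).toReal + (∫ y, f1 y ∂μ) ^ n / (q * t ^ q) := by
          rw [hG, integral_add (((integrable_const _).indicator (hF n)))
            ((pi_integrable_prod μ n f1 (hf1int n hn)).div_const _),
            integral_indicator_const _ (hF n), integral_div, pi_integral_pow]
          rw [smul_eq_mul, mul_comm]
          rfl
      _ ≤ t ^ p / p * (ν (F n)).toReal + Real.exp (C - 1) / (q * t ^ q) := by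
          gcongr
          exact hpow n hn
  -- choose t appropriately for each ε and conclude
  rw [NormedAddCommGroup.tendsto_nhds_zero]
  intro ε hε
  set s : ℝ := (C - 1 - Real.log (q * ε / 2)) / q + 1 with hs
  set t : ℝ := Real.exp s with htdef
  have ht : 0 < t := Real.exp_pos s
  have htq : t ^ q = Real.exp (s * q) := (Real.exp_mul s q).symm
  have hsmall : Real.exp (C - 1) / (q * t ^ q) < ε / 2 := by
    have heq : Real.exp (C - 1) / (q * t ^ q) = Real.exp (C - 1 - s * q) / q := by
      rw [htq, mul_comm, ← div_div, ← Real.exp_sub]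
    have harg : C - 1 - s * q = Real.log (q * ε / 2) - q := by
      rw [hs]; field_simp; ring
    rw [heq, harg, Real.exp_sub, Real.exp_log (by positivity)]
    rw [div_div]
    rw [div_lt_iff₀ (by positivity)]
    have hexpq : 1 < Real.exp q := by
      rw [← Real.exp_zero]; exact Real.exp_lt_exp.2 hq0
    calc q * ε / 2 = (q * ε / 2) * 1 := by ring
      _ < (q * ε / 2) * Real.exp q := by
          apply mul_lt_mul_of_pos_left hexpq (by positivity)
      _ = ε / 2 * (Real.exp q * q) := by ring
  have h2 : Tendsto (fun n => t ^ p / p *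
      ((Measure.pi fun _ : Fin n => μ) (F n)).toReal) atTop (nhds 0) := by
    have h3 : Tendsto (fun n => ((Measure.pi fun _ : Fin n => μ) (F n)).toReal)
        atTop (nhds 0) := by
      have := (ENNReal.tendsto_toReal (show (0 : ENNReal) ≠ ⊤ by simp)).comp hF0
      exact this
    simpa using Filter.Tendsto.const_mul (t ^ p / p) h3
  have hev : ∀ᶠ n in atTop, t ^ p / p *
      ((Measure.pi fun _ : Fin n => μ) (F n)).toReal < ε / 2 :=
    h2.eventually (gt_mem_nhds (by linarith))
  filter_upwards [hev, eventually_ge_atTop 1] with n hn1 hn2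
  have hnonneg : 0 ≤ ∫ x in F n, (∏ i, r (θ₀ + h n x / n) (x i))
      ∂(Measure.pi fun _ : Fin n => μ) :=
    setIntegral_nonneg (hF n) fun x _ => Finset.prod_nonneg fun i _ => hr0 _ _
  rw [Real.norm_eq_abs, abs_of_nonneg hnonneg]
  calc (∫ x in F n, (∏ i, r (θ₀ + h n x / n) (x i)) ∂(Measure.pi fun _ : Fin n => μ))
      ≤ t ^ p / p * ((Measure.pi fun _ : Fin n => μ) (F n)).toReal
        + Real.exp (C - 1) / (q * t ^ q) := key t ht n hn2
    _ < ε / 2 + ε / 2 := by linarith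
    _ = ε := by ring
end

section
/- Let η be a probability density on [0,1] with e^{−2S} ≤ η ≤ e^{2S} and |η'| ≤ 2S·η (so η ∈ C¹ with controlled derivative). For the scale family p_θ(x) = (1/θ)η(x/θ)·1{0 ≤ x ≤ θ} and θ_n = θ₀ + h/n with 0 ≤ h ≤ M < nθ₀/2, the squared Hellinger distance satisfies H²(P_{θ_n}, P_{θ₀}) ≤ C(S, θ₀)·M/n for a constant C(S, θ₀) depending only on S and θ₀ (for n large). -/
open MeasureTheory

lemma mvt_scale (S θ₀ : ℝ) (hS : 0 < S) (hθ₀ : 0 < θ₀) (η : ℝ → ℝ) (hηd : Differentiable ℝ η)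
    (hηb : ∀ x ∈ Set.Icc (0:ℝ) 1, Real.exp (-2*S) ≤ η x ∧ η x ≤ Real.exp (2*S))
    (hηd' : ∀ x ∈ Set.Icc (0:ℝ) 1, |deriv η x| ≤ 2*S*η x)
    (θn : ℝ) (hθn : θ₀ ≤ θn) (x : ℝ) (hx0 : 0 ≤ x) (hx1 : x ≤ θ₀) :
    |(1/θn) * η (x/θn) - (1/θ₀) * η (x/θ₀)| ≤
      (Real.exp (2*S) * (1 + 2*S) / θ₀^2) * (θn - θ₀) := by
  set E := Real.exp (2*S) with hE
  have hE0 : 0 < E := Real.exp_pos _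
  set F : ℝ → ℝ := fun θ => (1/θ) * η (x/θ) with hF
  set F' : ℝ → ℝ := fun θ => (-(θ^2)⁻¹) * η (x/θ) + θ⁻¹ * (deriv η (x/θ) * (x * (-(θ^2)⁻¹))) with hF'
  have key : ∀ θ ∈ Set.Icc θ₀ θn,
      HasDerivWithinAt F (F' θ) (Set.Icc θ₀ θn) θ ∧ ‖F' θ‖ ≤ E * (1 + 2*S) / θ₀^2 := by
    intro θ hθ
    have hθpos : 0 < θ := lt_of_lt_of_le hθ₀ hθ.1
    have hθne : θ ≠ 0 := hθpos.ne'
    have hinv : HasDerivAt (fun t : ℝ => t⁻¹) (-(θ^2)⁻¹) θ := hasDerivAt_inv hθne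
    have hxdiv : HasDerivAt (fun t : ℝ => x / t) (x * (-(θ^2)⁻¹)) θ := by
      simpa [div_eq_mul_inv] using hinv.const_mul x
    have hcomp : HasDerivAt (fun t : ℝ => η (x / t)) (deriv η (x/θ) * (x * (-(θ^2)⁻¹))) θ :=
      (hηd.differentiableAt.hasDerivAt).comp θ hxdiv
    have hFθ : HasDerivAt F (F' θ) θ := by
      simpa [hF, hF', one_div, Pi.mul_def] using hinv.mul hcomp
    refine ⟨hFθ.hasDerivWithinAt, ?_⟩
    -- bound
    have hu0 : 0 ≤ x/θ := div_nonneg hx0 hθpos.le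
    have hu1 : x/θ ≤ 1 := (div_le_one hθpos).2 (hx1.trans hθ.1)
    have hu : x/θ ∈ Set.Icc (0:ℝ) 1 := ⟨hu0, hu1⟩
    obtain ⟨hlb, hub⟩ := hηb _ hu
    have hdb := hηd' _ hu
    have he' : 0 ≤ η (x/θ) := le_trans (Real.exp_pos _).le hlb
    have ha' : (0:ℝ) ≤ (θ^2)⁻¹ := by positivity
    have ht' : (0:ℝ) ≤ θ⁻¹ := by positivity
    have habs : |F' θ| ≤ (θ^2)⁻¹ * η (x/θ) + θ⁻¹ * (|deriv η (x/θ)| * (x * (θ^2)⁻¹)) := by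
      calc |F' θ| ≤ |(-(θ^2)⁻¹) * η (x/θ)| + |θ⁻¹ * (deriv η (x/θ) * (x * (-(θ^2)⁻¹)))| :=
            abs_add_le _ _
        _ = (θ^2)⁻¹ * η (x/θ) + θ⁻¹ * (|deriv η (x/θ)| * (x * (θ^2)⁻¹)) := by
            simp [abs_mul, abs_of_nonneg ha', abs_of_nonneg he', abs_of_nonneg ht',
              abs_of_nonneg hx0]
    have hab : (θ^2)⁻¹ ≤ (θ₀^2)⁻¹ := by
      apply inv_anti₀ (by positivity)
      exact pow_le_pow_left₀ hθ₀.le hθ.1 2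
    have hb' : (0:ℝ) ≤ (θ₀^2)⁻¹ := by positivity
    have h1 : (θ^2)⁻¹ * η (x/θ) ≤ (θ₀^2)⁻¹ * E := mul_le_mul hab hub he' hb'
    have hxt : x * θ⁻¹ ≤ 1 := by
      rw [← div_eq_mul_inv]; exact (div_le_one hθpos).2 (hx1.trans hθ.1)
    have hdE : |deriv η (x/θ)| ≤ 2*S*E := hdb.trans (by nlinarith)
    have hda : |deriv η (x/θ)| * (θ^2)⁻¹ ≤ (2*S*E) * (θ₀^2)⁻¹ :=
      mul_le_mul hdE hab ha' (by positivity)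
    have h2 : θ⁻¹ * (|deriv η (x/θ)| * (x * (θ^2)⁻¹)) ≤ (2*S*E) * (θ₀^2)⁻¹ := by
      have : θ⁻¹ * (|deriv η (x/θ)| * (x * (θ^2)⁻¹))
          = (x * θ⁻¹) * (|deriv η (x/θ)| * (θ^2)⁻¹) := by ring
      rw [this]
      calc (x * θ⁻¹) * (|deriv η (x/θ)| * (θ^2)⁻¹)
          ≤ 1 * ((2*S*E) * (θ₀^2)⁻¹) := by
            apply mul_le_mul hxt hda (by positivity) zero_le_one
        _ = (2*S*E) * (θ₀^2)⁻¹ := one_mul _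
    rw [Real.norm_eq_abs]
    calc |F' θ| ≤ (θ^2)⁻¹ * η (x/θ) + θ⁻¹ * (|deriv η (x/θ)| * (x * (θ^2)⁻¹)) := habs
      _ ≤ (θ₀^2)⁻¹ * E + (2*S*E) * (θ₀^2)⁻¹ := add_le_add h1 h2
      _ = E * (1 + 2*S) / θ₀^2 := by field_simp
  have hmvt := Convex.norm_image_sub_le_of_norm_hasDerivWithin_le
    (f := F) (f' := F') (C := E * (1 + 2*S) / θ₀^2) (s := Set.Icc θ₀ θn)
    (fun θ hθ => (key θ hθ).1) (fun θ hθ => (key θ hθ).2) (convex_Icc _ _)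
    (Set.left_mem_Icc.2 hθn) (Set.right_mem_Icc.2 hθn)
  rw [Real.norm_eq_abs, Real.norm_eq_abs,
    abs_of_nonneg (show (0:ℝ) ≤ θn - θ₀ by linarith)] at hmvt
  simpa [hF] using hmvt


lemma sq_sqrt_sub_le' {a b : ℝ} (ha : 0 ≤ a) (hb : 0 ≤ b) :
    (Real.sqrt a - Real.sqrt b)^2 ≤ |a - b| := by
  have h1 := Real.sq_sqrt ha
  have h2 := Real.sq_sqrt hb
  have h3 := Real.sqrt_nonneg a
  have h4 := Real.sqrt_nonneg b
  rcases le_total b a with h | h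
  · rw [abs_of_nonneg (by linarith)]
    have h5 := Real.sqrt_le_sqrt h
    nlinarith
  · rw [abs_of_nonpos (by linarith)]
    have h5 := Real.sqrt_le_sqrt h
    nlinarith


/-- The scale family `p_θ(x) = (1/θ)·η(x/θ)·1{0 ≤ x ≤ θ}`. -/
noncomputable def scaleDens (η : ℝ → ℝ) (θ : ℝ) (x : ℝ) : ℝ :=
  if 0 ≤ x ∧ x ≤ θ then (1 / θ) * η (x / θ) else 0

/-- Hellinger bound for the scale model: for densities `η` on `[0,1]` with
`e^{−2S} ≤ η ≤ e^{2S}` and `|η'| ≤ 2S·η`, and `θₙ = θ₀ + h/n` with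
`0 ≤ h ≤ M < nθ₀/2`, the squared Hellinger distance satisfies
`H²(P_{θₙ}, P_{θ₀}) ≤ C(S,θ₀)·M/n` for a constant depending only on `S, θ₀`. -/
theorem stmt_19 (S θ₀ : ℝ) (hS : 0 < S) (hθ₀ : 0 < θ₀) :
    ∃ C : ℝ, 0 < C ∧
      ∀ η : ℝ → ℝ, Differentiable ℝ η →
        (∀ x ∈ Set.Icc (0 : ℝ) 1, Real.exp (-2 * S) ≤ η x ∧ η x ≤ Real.exp (2 * S)) →
        (∀ x ∈ Set.Icc (0 : ℝ) 1, |deriv η x| ≤ 2 * S * η x) →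
        (∫ x in (0 : ℝ)..1, η x = 1) →
        ∀ (n : ℕ) (M h : ℝ), 1 ≤ n → 0 < M → 0 ≤ h → h ≤ M → M < n * θ₀ / 2 →
          ∫ x, (Real.sqrt (scaleDens η (θ₀ + h / n) x) -
              Real.sqrt (scaleDens η θ₀ x)) ^ 2 ≤ C * M / n := by
  set E := Real.exp (2*S) with hE
  have hE0 : 0 < E := Real.exp_pos _
  set K1 : ℝ := E * (1 + 2*S) / θ₀^2 with hK1
  set K2 : ℝ := E / θ₀ with hK2
  refine ⟨E * (2*S + 2) / θ₀, by positivity, ?_⟩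
  intro η hηd hηb hηd' _ n M h hn hM hh0 hhM _
  have hn0 : (0:ℝ) < n := by exact_mod_cast Nat.lt_of_lt_of_le Nat.zero_lt_one hn
  have hhn0 : (0:ℝ) ≤ h / n := div_nonneg hh0 hn0.le
  set θn := θ₀ + h / n with hθndef
  have hθnθ0 : θ₀ ≤ θn := by simp [hθndef]; positivity
  have hθn0 : 0 < θn := lt_of_lt_of_le hθ₀ hθnθ0
  -- nonnegativity of densities
  have hdens_nonneg : ∀ θ : ℝ, 0 < θ → ∀ x, 0 ≤ scaleDens η θ x := by
    intro θ hθ x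
    unfold scaleDens
    split_ifs with hc
    · have hu : x / θ ∈ Set.Icc (0:ℝ) 1 :=
        ⟨div_nonneg hc.1 hθ.le, (div_le_one hθ).2 hc.2⟩
      have := (hηb _ hu).1
      have : 0 ≤ η (x / θ) := le_trans (Real.exp_pos _).le this
      positivity
    · exact le_rfl
  -- dominating function
  set g : ℝ → ℝ := fun x =>
    Set.indicator (Set.Icc 0 θ₀) (fun _ => K1 * (h/n)) x +
    Set.indicator (Set.Ioc θ₀ θn) (fun _ => K2) x with hg
  have hg1i : Integrable ((Set.Icc (0:ℝ) θ₀).indicator (fun _ => K1 * (h/n))) := by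
    rw [integrable_indicator_iff measurableSet_Icc]
    exact integrableOn_const measure_Icc_lt_top.ne
  have hg2i : Integrable ((Set.Ioc θ₀ θn).indicator (fun _ => K2)) := by
    rw [integrable_indicator_iff measurableSet_Ioc]
    exact integrableOn_const measure_Ioc_lt_top.ne
  have hgi : Integrable g := hg1i.add hg2i
  -- pointwise bound
  have hpt : ∀ x, (Real.sqrt (scaleDens η θn x) - Real.sqrt (scaleDens η θ₀ x))^2 ≤ g x := by
    intro x
    have hK1n : 0 ≤ K1 * (h/n) := by positivity
    have hK2n : 0 ≤ K2 := by positivity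
    have hgnonneg : 0 ≤ g x := by
      apply add_nonneg <;> exact Set.indicator_nonneg (fun _ _ => by positivity) x
    by_cases hx0 : 0 ≤ x
    · by_cases hx1 : x ≤ θ₀
      · -- x ∈ [0, θ₀]
        have hmvt := mvt_scale S θ₀ hS hθ₀ η hηd hηb hηd' θn hθnθ0 x hx0 hx1
        have hd1 : scaleDens η θn x = (1/θn) * η (x/θn) := by
          simp [scaleDens, hx0, hx1.trans hθnθ0]
        have hd2 : scaleDens η θ₀ x = (1/θ₀) * η (x/θ₀) := by
          simp [scaleDens, hx0, hx1]
        have hsq := sq_sqrt_sub_le' (hdens_nonneg θn hθn0 x) (hdens_nonneg θ₀ hθ₀ x)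
        have hgx : g x = K1 * (h/n) + Set.indicator (Set.Ioc θ₀ θn) (fun _ => K2) x := by
          simp [hg, Set.indicator_of_mem (Set.mem_Icc.2 ⟨hx0, hx1⟩)]
        have hind2 : 0 ≤ Set.indicator (Set.Ioc θ₀ θn) (fun _ => K2) x :=
          Set.indicator_nonneg (fun _ _ => hK2n) x
        have hθdiff : θn - θ₀ = h / n := by simp [hθndef]
        rw [hθdiff] at hmvt
        calc (Real.sqrt (scaleDens η θn x) - Real.sqrt (scaleDens η θ₀ x))^2
            ≤ |scaleDens η θn x - scaleDens η θ₀ x| := hsq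
          _ ≤ K1 * (h/n) := by rw [hd1, hd2]; exact hmvt
          _ ≤ g x := by rw [hgx]; linarith
      · by_cases hx2 : x ≤ θn
        · -- x ∈ (θ₀, θn]
          push_neg at hx1
          have hd2 : scaleDens η θ₀ x = 0 := by
            have hc : ¬(0 ≤ x ∧ x ≤ θ₀) := fun hc => absurd hc.2 (not_le.2 hx1)
            simp [scaleDens, hc]
          have hd1 : scaleDens η θn x = (1/θn) * η (x/θn) := by
            simp [scaleDens, hx0, hx2]
          have hub : η (x/θn) ≤ E := (hηb _ ⟨div_nonneg hx0 hθn0.le, (div_le_one hθn0).2 hx2⟩).2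
          have hbd : scaleDens η θn x ≤ K2 := by
            rw [hd1, hK2]
            have h1 : (1/θn) * η (x/θn) ≤ (1/θn) * E :=
              mul_le_mul_of_nonneg_left hub (by positivity)
            have h2 : (1/θn) * E ≤ E / θ₀ := by
              rw [div_eq_mul_inv E θ₀, mul_comm E]
              apply mul_le_mul_of_nonneg_right _ hE0.le
              rw [one_div]
              exact inv_anti₀ hθ₀ hθnθ0
            linarith
          have hsqv : (Real.sqrt (scaleDens η θn x) - Real.sqrt (scaleDens η θ₀ x))^2
              = scaleDens η θn x := by
            rw [hd2, Real.sqrt_zero, sub_zero, Real.sq_sqrt (hdens_nonneg θn hθn0 x)]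
          have hgx : g x = 0 + K2 := by
            simp [hg, Set.indicator_of_mem (Set.mem_Ioc.2 ⟨hx1, hx2⟩),
              Set.indicator_of_notMem (by simp [Set.mem_Icc]; intro; linarith : x ∉ Set.Icc (0:ℝ) θ₀)]
          rw [hsqv, hgx, zero_add]; exact hbd
        · -- x > θn
          push_neg at hx1 hx2
          have hc1 : ¬(0 ≤ x ∧ x ≤ θn) := fun hc => absurd hc.2 (not_le.2 hx2)
          have hc2 : ¬(0 ≤ x ∧ x ≤ θ₀) := fun hc => absurd hc.2 (not_le.2 hx1)
          have hd1 : scaleDens η θn x = 0 := by simp [scaleDens, hc1]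
          have hd2 : scaleDens η θ₀ x = 0 := by simp [scaleDens, hc2]
          rw [hd1, hd2]; simpa using hgnonneg
    · -- x < 0
      have hd1 : scaleDens η θn x = 0 := by simp [scaleDens]; intro h'; exact absurd h' hx0
      have hd2 : scaleDens η θ₀ x = 0 := by simp [scaleDens]; intro h'; exact absurd h' hx0
      rw [hd1, hd2]; simpa using hgnonneg
  -- integral of g
  have hgint : ∫ x, g x = θ₀ * (K1 * (h/n)) + (h/n) * K2 := by
    rw [hg]
    rw [integral_add hg1i hg2i]
    rw [integral_indicator_const _ measurableSet_Icc, integral_indicator_const _ measurableSet_Ioc]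
    rw [measureReal_def, measureReal_def, Real.volume_Icc, Real.volume_Ioc]
    have h1 : (ENNReal.ofReal (θ₀ - 0)).toReal = θ₀ := by
      rw [ENNReal.toReal_ofReal (by linarith)]; ring
    have h2 : (ENNReal.ofReal (θn - θ₀)).toReal = h/n := by
      rw [ENNReal.toReal_ofReal (by linarith)]; simp [hθndef]
    rw [h1, h2]
    simp [smul_eq_mul]
  have hmono : ∫ x, (Real.sqrt (scaleDens η θn x) - Real.sqrt (scaleDens η θ₀ x))^2 ≤ ∫ x, g x := by
    apply integral_mono_of_nonneg
    · exact Filter.Eventually.of_forall (fun x => sq_nonneg _)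
    · exact hgi
    · exact Filter.Eventually.of_forall hpt
  calc ∫ x, (Real.sqrt (scaleDens η (θ₀ + h / n) x) - Real.sqrt (scaleDens η θ₀ x))^2
      = ∫ x, (Real.sqrt (scaleDens η θn x) - Real.sqrt (scaleDens η θ₀ x))^2 := by rw [hθndef]
    _ ≤ ∫ x, g x := hmono
    _ = θ₀ * (K1 * (h/n)) + (h/n) * K2 := hgint
    _ = (E * (2*S + 2) / θ₀) * (h/n) := by
        rw [hK1, hK2]; field_simp; ring
    _ ≤ (E * (2*S + 2) / θ₀) * (M/n) := by gcongr
    _ = E * (2*S + 2) / θ₀ * M / n := by ring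
end
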